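/- In the structure R₂, if α <₂ β for some ordinal β > α, then the set {γ < α : γ <₁ α} of <₁-predecessors of α is cofinal in α; in particular α is a limit ordinal and the order type of its set of <₁-predecessors is a limit ordinal (α is the proper supremum of an infinite <₁-chain). -/

import Mathlib

open Ordinal

noncomputable section

/-- The least epsilon number: the least fixed point of `ξ ↦ ω ^ ξ`. -/
def eps0 : Ordinal := sInf {ξ : Ordinal | Ordinal.omega0 ^ ξ = ξ}

namespace R2

/-- Terms of the language `{≤, ≤₁, ≤₂}`: existentially quantified variables,
universally quantified variables, and parameters (ordinal constants). -/
inductive Trm : Type 1 where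
  | evar : ℕ → Trm
  | avar : ℕ → Trm
  | cst  : Ordinal → Trm

def Trm.val (v w : ℕ → Ordinal) : Trm → Ordinal
  | .evar n => v n
  | .avar n => w n
  | .cst c  => c

/-- Quantifier-free formulas in the language `{≤, ≤₁, ≤₂}`. -/
inductive QF : Type 1 where
  | le  : Trm → Trm → QF
  | le1 : Trm → Trm → QF
  | le2 : Trm → Trm → QF
  | not : QF → QF
  | and : QF → QF → QF
  | or  : QF → QF → QF

def QF.eval (r1 r2 : Ordinal → Ordinal → Prop) (v w : ℕ → Ordinal) : QF → Prop
  | .le s t  => s.val v w ≤ t.val v w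
  | .le1 s t => r1 (s.val v w) (t.val v w)
  | .le2 s t => r2 (s.val v w) (t.val v w)
  | .not φ   => ¬ φ.eval r1 r2 v w
  | .and φ ψ => φ.eval r1 r2 v w ∧ ψ.eval r1 r2 v w
  | .or φ ψ  => φ.eval r1 r2 v w ∨ ψ.eval r1 r2 v w

def Trm.NoAvar : Trm → Prop
  | .avar _ => False
  | _ => True

def QF.NoAvar : QF → Prop
  | .le s t  => s.NoAvar ∧ t.NoAvar
  | .le1 s t => s.NoAvar ∧ t.NoAvar
  | .le2 s t => s.NoAvar ∧ t.NoAvar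
  | .not φ   => φ.NoAvar
  | .and φ ψ => φ.NoAvar ∧ ψ.NoAvar
  | .or φ ψ  => φ.NoAvar ∧ ψ.NoAvar

def Trm.CstBelow (δ : Ordinal) : Trm → Prop
  | .cst c => c < δ
  | _ => True

def QF.CstBelow (δ : Ordinal) : QF → Prop
  | .le s t  => s.CstBelow δ ∧ t.CstBelow δ
  | .le1 s t => s.CstBelow δ ∧ t.CstBelow δ
  | .le2 s t => s.CstBelow δ ∧ t.CstBelow δ
  | .not φ   => φ.CstBelow δ
  | .and φ ψ => φ.CstBelow δ ∧ ψ.CstBelow δ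
  | .or φ ψ  => φ.CstBelow δ ∧ ψ.CstBelow δ

/-- Satisfaction of a Σ₁-formula (an existential block in front of a
quantifier-free formula without universal variables) in the segment of
ordinals `< δ`, with the indicated interpretations of `≤₁` and `≤₂`. -/
def Sat1 (r1 r2 : Ordinal → Ordinal → Prop) (δ : Ordinal) (φ : QF) : Prop :=
  ∃ v : ℕ → Ordinal, (∀ n, v n < δ) ∧ φ.eval r1 r2 v v

/-- Satisfaction of a Σ₂-formula (a block of existential quantifiers followed
by a block of universal quantifiers in front of a quantifier-free formula) in
the segment of ordinals `< δ`. -/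
def Sat2 (r1 r2 : Ordinal → Ordinal → Prop) (δ : Ordinal) (φ : QF) : Prop :=
  ∃ v : ℕ → Ordinal, (∀ n, v n < δ) ∧
    ∀ w : ℕ → Ordinal, (∀ n, w n < δ) → φ.eval r1 r2 v w

/-- `(α; ≤, ≤₁, ≤₂)` is a Σ₁-elementary substructure of `(β; ≤, ≤₁, ≤₂)`:
Σ₁-sentences with parameters `< α` hold in `α` iff they hold in `β`. -/
def Sig1Elem (r1 r2 : Ordinal → Ordinal → Prop) (α β : Ordinal) : Prop :=
  ∀ φ : QF, φ.NoAvar → φ.CstBelow α → (Sat1 r1 r2 α φ ↔ Sat1 r1 r2 β φ)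

/-- `(α; ≤, ≤₁, ≤₂)` is a Σ₂-elementary substructure of `(β; ≤, ≤₁, ≤₂)`. -/
def Sig2Elem (r1 r2 : Ordinal → Ordinal → Prop) (α β : Ordinal) : Prop :=
  ∀ φ : QF, φ.CstBelow α → (Sat2 r1 r2 α φ ↔ Sat2 r1 r2 β φ)

/-- The simultaneous recursive (in `β`) definition of `α ≤₁ β` (`i = false`)
and `α ≤₂ β` (`i = true`): `α ≤ᵢ β` iff `α ≤ β` and `(α; ≤, ≤₁, ≤₂)` is a
Σᵢ-elementary substructure of `(β; ≤, ≤₁, ≤₂)`, where the relations `≤₁, ≤₂`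
are the restrictions to the segment below `β`, already defined by recursion. -/
noncomputable def leAux : Ordinal → Bool → Ordinal → Prop :=
  WellFounded.fix Ordinal.lt_wf fun β IH i α =>
    α ≤ β ∧
      (match i with
        | false => Sig1Elem
        | true  => Sig2Elem)
        (fun x y => ∃ h : y < β, IH y h false x)
        (fun x y => ∃ h : y < β, IH y h true x) α β

/-- `α ≤₁ β` in the structure `R₂`. -/
def le1 (α β : Ordinal) : Prop := leAux β false α

/-- `α ≤₂ β` in the structure `R₂`. -/
def le2 (α β : Ordinal) : Prop := leAux β true α

def lt1 (α β : Ordinal) : Prop := le1 α β ∧ α < β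

def lt2 (α β : Ordinal) : Prop := le2 α β ∧ α < β

/-- `h` is an isomorphism (w.r.t. `≤, ≤₁, ≤₂`) on the set `A`. -/
def IsoOn (h : Ordinal → Ordinal) (A : Set Ordinal) : Prop :=
  ∀ x ∈ A, ∀ y ∈ A,
    (x ≤ y ↔ h x ≤ h y) ∧ (le1 x y ↔ le1 (h x) (h y)) ∧ (le2 x y ↔ le2 (h x) (h y))

end R2


namespace R2

theorem le1_def (α β : Ordinal) : le1 α β ↔ α ≤ β ∧
    Sig1Elem (fun x y => ∃ _ : y < β, le1 x y) (fun x y => ∃ _ : y < β, le2 x y) α β := by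
  unfold le1 leAux
  rw [WellFounded.fix_eq]
  exact Iff.rfl

theorem le2_def (α β : Ordinal) : le2 α β ↔ α ≤ β ∧
    Sig2Elem (fun x y => ∃ _ : y < β, le1 x y) (fun x y => ∃ _ : y < β, le2 x y) α β := by
  unfold le2 leAux
  rw [WellFounded.fix_eq]
  exact Iff.rfl

theorem Trm.val_lt {B : Ordinal} {v w : ℕ → Ordinal} (hv : ∀ n, v n < B)
    (hw : ∀ n, w n < B) : ∀ {t : Trm}, t.CstBelow B → t.val v w < B
  | .evar n, _ => hv n
  | .avar n, _ => hw n
  | .cst _, h => h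

theorem QF.eval_congr_rel {r1 r1' r2 r2' : Ordinal → Ordinal → Prop} {B : Ordinal}
    (h1 : ∀ x y, x < B → y < B → (r1 x y ↔ r1' x y))
    (h2 : ∀ x y, x < B → y < B → (r2 x y ↔ r2' x y))
    {v w : ℕ → Ordinal} (hv : ∀ n, v n < B) (hw : ∀ n, w n < B) :
    ∀ {φ : QF}, φ.CstBelow B → (φ.eval r1 r2 v w ↔ φ.eval r1' r2' v w)
  | .le _ _, _ => Iff.rfl
  | .le1 _ _, h => h1 _ _ (Trm.val_lt hv hw h.1) (Trm.val_lt hv hw h.2)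
  | .le2 _ _, h => h2 _ _ (Trm.val_lt hv hw h.1) (Trm.val_lt hv hw h.2)
  | .not φ, h => not_congr (QF.eval_congr_rel h1 h2 hv hw h)
  | .and φ ψ, h => and_congr (QF.eval_congr_rel h1 h2 hv hw h.1)
      (QF.eval_congr_rel h1 h2 hv hw h.2)
  | .or φ ψ, h => or_congr (QF.eval_congr_rel h1 h2 hv hw h.1)
      (QF.eval_congr_rel h1 h2 hv hw h.2)

theorem Sat1_congr_rel {r1 r1' r2 r2' : Ordinal → Ordinal → Prop} {B δ : Ordinal}
    (h1 : ∀ x y, x < B → y < B → (r1 x y ↔ r1' x y))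
    (h2 : ∀ x y, x < B → y < B → (r2 x y ↔ r2' x y))
    (hδ : δ ≤ B) {φ : QF} (hφ : φ.CstBelow B) :
    Sat1 r1 r2 δ φ ↔ Sat1 r1' r2' δ φ := by
  unfold Sat1
  refine exists_congr fun v => and_congr_right fun hv => ?_
  exact QF.eval_congr_rel h1 h2 (fun n => (hv n).trans_le hδ)
    (fun n => (hv n).trans_le hδ) hφ

theorem Sat2_congr_rel {r1 r1' r2 r2' : Ordinal → Ordinal → Prop} {B δ : Ordinal}
    (h1 : ∀ x y, x < B → y < B → (r1 x y ↔ r1' x y))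
    (h2 : ∀ x y, x < B → y < B → (r2 x y ↔ r2' x y))
    (hδ : δ ≤ B) {φ : QF} (hφ : φ.CstBelow B) :
    Sat2 r1 r2 δ φ ↔ Sat2 r1' r2' δ φ := by
  unfold Sat2
  refine exists_congr fun v => and_congr_right fun hv => ?_
  refine forall_congr' fun w => imp_congr_right fun hw => ?_
  exact QF.eval_congr_rel h1 h2 (fun n => (hv n).trans_le hδ)
    (fun n => (hw n).trans_le hδ) hφ

theorem Trm.CstBelow.mono {a b : Ordinal} (hab : a ≤ b) :
    ∀ {t : Trm}, t.CstBelow a → t.CstBelow b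
  | .evar _, _ => trivial
  | .avar _, _ => trivial
  | .cst _, h => h.trans_le hab

theorem QF.CstBelow.mono {a b : Ordinal} (hab : a ≤ b) {φ : QF}
    (h : φ.CstBelow a) : φ.CstBelow b := by
  induction φ with
  | le s t => exact ⟨h.1.mono hab, h.2.mono hab⟩
  | le1 s t => exact ⟨h.1.mono hab, h.2.mono hab⟩
  | le2 s t => exact ⟨h.1.mono hab, h.2.mono hab⟩
  | not φ ih => exact ih h
  | and φ ψ ih1 ih2 => exact ⟨ih1 h.1, ih2 h.2⟩
  | or φ ψ ih1 ih2 => exact ⟨ih1 h.1, ih2 h.2⟩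

theorem le1_iff (α β : Ordinal) : le1 α β ↔ α ≤ β ∧ Sig1Elem le1 le2 α β := by
  rw [le1_def]
  refine and_congr_right fun hab => forall_congr' fun φ => ?_
  refine imp_congr_right fun hna => imp_congr_right fun hc => ?_
  have hcb : φ.CstBelow β := hc.mono hab
  have e1 : ∀ x y, x < β → y < β → ((∃ _ : y < β, le1 x y) ↔ le1 x y) :=
    fun _ _ _ hy => by simp [hy]
  have e2 : ∀ x y, x < β → y < β → ((∃ _ : y < β, le2 x y) ↔ le2 x y) :=
    fun _ _ _ hy => by simp [hy]
  rw [Sat1_congr_rel e1 e2 hab hcb, Sat1_congr_rel e1 e2 le_rfl hcb]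

theorem le2_iff (α β : Ordinal) : le2 α β ↔ α ≤ β ∧ Sig2Elem le1 le2 α β := by
  rw [le2_def]
  refine and_congr_right fun hab => forall_congr' fun φ => ?_
  refine imp_congr_right fun hc => ?_
  have hcb : φ.CstBelow β := hc.mono hab
  have e1 : ∀ x y, x < β → y < β → ((∃ _ : y < β, le1 x y) ↔ le1 x y) :=
    fun _ _ _ hy => by simp [hy]
  have e2 : ∀ x y, x < β → y < β → ((∃ _ : y < β, le2 x y) ↔ le2 x y) :=
    fun _ _ _ hy => by simp [hy]
  rw [Sat2_congr_rel e1 e2 hab hcb, Sat2_congr_rel e1 e2 le_rfl hcb]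

theorem Trm.val_noavar {v w w' : ℕ → Ordinal} :
    ∀ {t : Trm}, t.NoAvar → t.val v w = t.val v w'
  | .evar _, _ => rfl
  | .cst _, _ => rfl

theorem QF.eval_noavar {r1 r2 : Ordinal → Ordinal → Prop} {v w w' : ℕ → Ordinal} :
    ∀ {φ : QF}, φ.NoAvar → (φ.eval r1 r2 v w ↔ φ.eval r1 r2 v w')
  | .le s t, h => by
      unfold QF.eval; rw [Trm.val_noavar (w' := w') h.1, Trm.val_noavar (w' := w') h.2]
  | .le1 s t, h => by
      unfold QF.eval; rw [Trm.val_noavar (w' := w') h.1, Trm.val_noavar (w' := w') h.2]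
  | .le2 s t, h => by
      unfold QF.eval; rw [Trm.val_noavar (w' := w') h.1, Trm.val_noavar (w' := w') h.2]
  | .not φ, h => not_congr (QF.eval_noavar h)
  | .and _ _, h => and_congr (QF.eval_noavar h.1) (QF.eval_noavar h.2)
  | .or _ _, h => or_congr (QF.eval_noavar h.1) (QF.eval_noavar h.2)

theorem sat1_iff_sat2 {r1 r2 : Ordinal → Ordinal → Prop} {δ : Ordinal} {φ : QF}
    (h : φ.NoAvar) : Sat1 r1 r2 δ φ ↔ Sat2 r1 r2 δ φ := by
  constructor
  · rintro ⟨v, hv, he⟩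
    exact ⟨v, hv, fun w _ => (QF.eval_noavar h).mp he⟩
  · rintro ⟨v, hv, H⟩
    exact ⟨v, hv, H v hv⟩

theorem Sat1.mono {r1 r2 : Ordinal → Ordinal → Prop} {δ δ' : Ordinal} {φ : QF}
    (hδ : δ ≤ δ') : Sat1 r1 r2 δ φ → Sat1 r1 r2 δ' φ := fun ⟨v, hv, he⟩ =>
  ⟨v, fun n => (hv n).trans_le hδ, he⟩

theorem le1_of_le2 {α β : Ordinal} (h : le2 α β) : le1 α β := by
  rw [le2_iff] at h
  rw [le1_iff]
  refine ⟨h.1, fun φ hna hc => ?_⟩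
  rw [sat1_iff_sat2 hna, sat1_iff_sat2 hna]
  exact h.2 φ hc

theorem le1_interval {α β γ : Ordinal} (h : le1 α β) (h1 : α ≤ γ) (h2 : γ ≤ β) :
    le1 α γ := by
  rw [le1_iff] at h
  rw [le1_iff]
  exact ⟨h1, fun φ hna hc =>
    ⟨fun s => s.mono h1, fun s => (h.2 φ hna hc).mpr (s.mono h2)⟩⟩

def Trm.evars : Trm → Finset ℕ
  | .evar n => {n}
  | _ => ∅

def QF.evars : QF → Finset ℕ
  | .le s t => s.evars ∪ t.evars
  | .le1 s t => s.evars ∪ t.evars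
  | .le2 s t => s.evars ∪ t.evars
  | .not φ => φ.evars
  | .and φ ψ => φ.evars ∪ ψ.evars
  | .or φ ψ => φ.evars ∪ ψ.evars

theorem Trm.val_congr_evars {v v' w : ℕ → Ordinal} :
    ∀ {t : Trm}, (∀ n ∈ t.evars, v n = v' n) → t.val v w = t.val v' w
  | .evar n, h => h n (Finset.mem_singleton_self n)
  | .avar _, _ => rfl
  | .cst _, _ => rfl

theorem QF.eval_congr_evars {r1 r2 : Ordinal → Ordinal → Prop} {v v' w : ℕ → Ordinal} :
    ∀ {φ : QF}, (∀ n ∈ φ.evars, v n = v' n) → (φ.eval r1 r2 v w ↔ φ.eval r1 r2 v' w)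
  | .le s t, h => by
      unfold QF.eval
      rw [Trm.val_congr_evars (fun n hn => h n (Finset.mem_union_left _ hn)),
        Trm.val_congr_evars (v := v) (fun n hn => h n (Finset.mem_union_right _ hn))]
  | .le1 s t, h => by
      unfold QF.eval
      rw [Trm.val_congr_evars (fun n hn => h n (Finset.mem_union_left _ hn)),
        Trm.val_congr_evars (v := v) (fun n hn => h n (Finset.mem_union_right _ hn))]
  | .le2 s t, h => by
      unfold QF.eval
      rw [Trm.val_congr_evars (fun n hn => h n (Finset.mem_union_left _ hn)),
        Trm.val_congr_evars (v := v) (fun n hn => h n (Finset.mem_union_right _ hn))]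
  | .not φ, h => not_congr (QF.eval_congr_evars h)
  | .and φ ψ, h => and_congr
      (QF.eval_congr_evars fun n hn => h n (Finset.mem_union_left _ hn))
      (QF.eval_congr_evars fun n hn => h n (Finset.mem_union_right _ hn))
  | .or φ ψ, h => or_congr
      (QF.eval_congr_evars fun n hn => h n (Finset.mem_union_left _ hn))
      (QF.eval_congr_evars fun n hn => h n (Finset.mem_union_right _ hn))

theorem le1_limit {α x : Ordinal} (hl : Order.IsSuccLimit α) (hx : x < α)
    (H : ∀ y, x ≤ y → y < α → le1 x y) : le1 x α := by
  rw [le1_iff]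
  refine ⟨hx.le, fun φ hna hc => ⟨fun s => s.mono hx.le, fun s => ?_⟩⟩
  obtain ⟨v, hv, he⟩ := s
  set v' : ℕ → Ordinal := fun n => if n ∈ φ.evars then v n else 0 with hv'
  set sv : Ordinal := φ.evars.sup v with hsv
  set y : Ordinal := max x (sv + 1) with hy
  have hsv1 : sv < sv + 1 := by
    rw [Ordinal.add_one_eq_succ]; exact Order.lt_succ sv
  have hsvα : sv < α := by
    rcases Finset.eq_empty_or_nonempty φ.evars with he' | hne
    · rw [hsv, he', Finset.sup_empty]
      simpa using hl.pos
    · rw [hsv, Finset.sup_lt_iff (α := Ordinal) (by simpa using hl.pos)]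
      exact fun n _ => hv n
  have hyα : y < α := by
    refine max_lt hx ?_
    rw [Ordinal.add_one_eq_succ]
    exact hl.succ_lt hsvα
  have hxy : x ≤ y := le_max_left _ _
  have hv'y : ∀ n, v' n < y := by
    intro n
    rw [hv']
    by_cases hn : n ∈ φ.evars
    · simp only [hn, if_true]
      exact (((Finset.le_sup hn).trans_lt hsv1)).trans_le (le_max_right _ _)
    · simp only [hn, if_false]
      exact (((zero_le (a := sv)).trans_lt hsv1)).trans_le (le_max_right _ _)
  have hagree : ∀ n ∈ φ.evars, v n = v' n := by
    intro n hn; rw [hv']; simp [hn]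
  have he' : φ.eval le1 le2 v' v' := by
    have h1 : φ.eval le1 le2 v' v := (QF.eval_congr_evars hagree).mp he
    exact (QF.eval_noavar hna).mp h1
  have hle1 := (le1_iff x y).mp (H y hxy hyα)
  exact (hle1.2 φ hna hc).mpr ⟨v', hv'y, he'⟩

end R2

/-- In `R₂`: if `α <₂ β`, the set of `<₁`-predecessors of `α` is cofinal in
`α`; in particular `α` is a limit ordinal. -/
theorem lt1_predecessors_cofinal_of_lt2 (α β : Ordinal) (h : R2.lt2 α β) :
    (∀ η < α, ∃ γ, η < γ ∧ γ < α ∧ R2.lt1 γ α) ∧ Order.IsSuccLimit α := by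
  obtain ⟨h2, hab⟩ := h
  have h2' := (R2.le2_iff α β).mp h2
  have hbpos : 0 < β := (zero_le (a := α)).trans_lt hab
  -- α is positive
  have hα0 : 0 < α := by
    by_contra h0
    push_neg at h0
    have hz : α = 0 := le_antisymm h0 (zero_le (a := α))
    have hcst : R2.QF.CstBelow α (.le (.evar 0) (.evar 0)) := ⟨trivial, trivial⟩
    have hsatβ : R2.Sat2 R2.le1 R2.le2 β (.le (.evar 0) (.evar 0)) :=
      ⟨fun _ => 0, fun _ => hbpos, fun w _ => le_rfl⟩
    obtain ⟨v, hv, -⟩ := (h2'.2 _ hcst).mpr hsatβ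
    exact absurd (hv 0) (by rw [hz]; exact (zero_le (a := _)).not_gt)
  -- α is a limit
  have hlim : Order.IsSuccLimit α := by
    rcases Ordinal.zero_or_succ_or_isSuccLimit α with hz | ⟨a, ha⟩ | hl
    · exact absurd hz hα0.ne'
    · exfalso
      have haα : a < α := by rw [← ha]; exact Order.lt_succ a
      have hcst : R2.QF.CstBelow α (.le (.avar 0) (.cst a)) := ⟨trivial, haα⟩
      have hsatα : R2.Sat2 R2.le1 R2.le2 α (.le (.avar 0) (.cst a)) := by
        refine ⟨fun _ => a, fun _ => haα, fun w hw => ?_⟩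
        have := hw 0
        rw [← ha] at this
        exact Order.lt_succ_iff.mp this
      obtain ⟨v, hv, H⟩ := (h2'.2 _ hcst).mp hsatα
      have := H (fun _ => α) (fun _ => hab)
      exact absurd this (not_le.mpr haα)
    · exact hl
  refine ⟨fun η hη => ?_, hlim⟩
  -- the Σ₂ sentence: ∃ x ∀ y, η < x ∧ (x ≤ y → x ≤₁ y)
  set σ : R2.QF := .and (.not (.le (.evar 0) (.cst η)))
    (.or (.not (.le (.evar 0) (.avar 0))) (.le1 (.evar 0) (.avar 0))) with hσ
  have hcst : σ.CstBelow α := ⟨⟨trivial, hη⟩, ⟨trivial, trivial⟩, trivial, trivial⟩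
  have hsatβ : R2.Sat2 R2.le1 R2.le2 β σ := by
    refine ⟨fun _ => α, fun _ => hab, fun w hw => ?_⟩
    refine ⟨not_le.mpr hη, ?_⟩
    by_cases hαw : α ≤ w 0
    · exact Or.inr (R2.le1_interval (R2.le1_of_le2 h2) hαw (hw 0).le)
    · exact Or.inl hαw
  obtain ⟨v, hv, H⟩ := (h2'.2 σ hcst).mpr hsatβ
  refine ⟨v 0, ?_, hv 0, ?_, hv 0⟩
  · have := (H (fun _ => 0) (fun _ => hα0)).1
    exact not_le.mp this
  · refine R2.le1_limit hlim (hv 0) fun y hxy hyα => ?_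
    have := (H (fun _ => y) (fun _ => hyα)).2
    rcases this with hno | hyes
    · exact absurd hxy hno
    · exact hyes

end
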